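/- Let a_1,...,a_k, b, n be integers with n ≥ 1, and suppose gcd(a_1,...,a_k,n) divides b. Then the number of solutions (x_1,...,x_k) ∈ (Z/nZ)^k of the congruence a_1x_1 + ... + a_kx_k ≡ b (mod n) is exactly gcd(a_1,...,a_k,n) · n^{k-1}. -/

import Mathlib

theorem my_gcd_repr {ι : Type*} [DecidableEq ι] (s : Finset ι) (f : ι → ℤ) :
    ∃ c : ι → ℤ, s.gcd f = ∑ i ∈ s, c i * f i := by
  induction s using Finset.induction_on with
  | empty => exact ⟨0, by simp [Finset.gcd_empty]⟩
  | @insert i s hi ih =>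
    obtain ⟨c, hc⟩ := ih
    set A := Int.gcdA (f i) (s.gcd f) with hA
    set B := Int.gcdB (f i) (s.gcd f) with hB
    refine ⟨fun j => if j = i then A else c j * B, ?_⟩
    have hg : (insert i s).gcd f = (Int.gcd (f i) (s.gcd f) : ℤ) := by
      rw [Finset.gcd_insert, Int.coe_gcd]
    rw [hg, Int.gcd_eq_gcd_ab, ← hA, ← hB, Finset.sum_insert hi]
    simp only [if_pos rfl]
    rw [hc, Finset.sum_mul]
    congr 1
    · exact mul_comm _ _
    · exact Finset.sum_congr rfl fun j hj => by
        rw [if_neg (by rintro rfl; exact hi hj)]; ring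

theorem stmt_1 (k n : ℕ) (hn : 1 ≤ n) (hk : 1 ≤ k) (a : Fin k → ℤ) (b : ℤ)
    (h : (Int.gcd (Finset.univ.gcd a) n : ℤ) ∣ b) :
    Nat.card {x : Fin k → ZMod n // ∑ i, (a i : ZMod n) * x i = (b : ZMod n)} =
      Int.gcd (Finset.univ.gcd a) n * n ^ (k - 1) := by
  haveI : NeZero n := ⟨by omega⟩
  set A : ℤ := Finset.univ.gcd a with hAdef
  set d : ℕ := Int.gcd A n with hddef
  have hdvdn : d ∣ n := Int.natCast_dvd_natCast.mp (Int.gcd_dvd_right A n)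
  have hdpos : 0 < d := Nat.pos_of_dvd_of_pos hdvdn (by omega)
  -- the homomorphism
  let φ : (Fin k → ZMod n) →+ ZMod n :=
    AddMonoidHom.mk' (fun x => ∑ i, (a i : ZMod n) * x i)
      (fun x y => by simp [mul_add, Finset.sum_add_distrib])
  -- range = zmultiples d
  have hmem : ∀ y : ZMod n, ((d : ℤ) : ZMod n) * y ∈ AddSubgroup.zmultiples ((d : ℤ) : ZMod n) := by
    intro y
    obtain ⟨z, rfl⟩ := ZMod.intCast_surjective y
    exact ⟨z, by show z • ((d:ℤ):ZMod n) = _; rw [zsmul_eq_mul]; push_cast; ring⟩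
  have hrange : φ.range = AddSubgroup.zmultiples (((d : ℤ)) : ZMod n) := by
    apply le_antisymm
    · rintro _ ⟨x, rfl⟩
      show ∑ i, (a i : ZMod n) * x i ∈ _
      apply AddSubgroup.sum_mem
      intro i _
      have hdvd : (d : ℤ) ∣ a i :=
        dvd_trans (Int.gcd_dvd_left A n) (Finset.gcd_dvd (Finset.mem_univ i))
      obtain ⟨m, hm⟩ := hdvd
      have : (a i : ZMod n) * x i = ((d : ℤ) : ZMod n) * ((m : ZMod n) * x i) := by
        rw [hm]; push_cast; ring
      rw [this]
      exact hmem _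
    · rw [AddSubgroup.zmultiples_le]
      obtain ⟨c, hc⟩ := my_gcd_repr (Finset.univ : Finset (Fin k)) a
      have hbez := Int.gcd_eq_gcd_ab A n
      refine ⟨fun i => ((c i * Int.gcdA A n : ℤ) : ZMod n), ?_⟩
      show ∑ i, (a i : ZMod n) * _ = _
      have : ((d : ℤ) : ZMod n) = ((A * Int.gcdA A n : ℤ) : ZMod n) := by
        rw [← hddef] at hbez
        rw [show (A * Int.gcdA A n : ℤ) = (d : ℤ) - n * Int.gcdB A n by rw [hbez]; ring]
        push_cast
        simp [ZMod.natCast_self]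
      rw [this, hAdef, hc]
      push_cast
      rw [Finset.sum_mul]
      exact Finset.sum_congr rfl fun i _ => by ring
  -- a particular solution
  have hbmem : (b : ZMod n) ∈ φ.range := by
    obtain ⟨t, rfl⟩ := h
    rw [hrange]
    have : (((d : ℤ) * t : ℤ) : ZMod n) = ((d : ℤ) : ZMod n) * ((t : ℤ) : ZMod n) := by push_cast; ring
    rw [this]
    exact hmem _
  obtain ⟨x₀, hx₀⟩ := hbmem
  -- solutions ≃ kernel
  have hcard1 : Nat.card {x : Fin k → ZMod n // ∑ i, (a i : ZMod n) * x i = (b : ZMod n)} =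
      Nat.card φ.ker := by
    apply Nat.card_congr
    refine ⟨fun x => ⟨x.1 - x₀, ?_⟩, fun y => ⟨y.1 + x₀, ?_⟩, fun x => by simp, fun y => by simp⟩
    · have hx := x.2
      simp only [AddMonoidHom.mem_ker, map_sub, hx₀]
      show φ x.1 - _ = 0
      have : φ x.1 = (b : ZMod n) := hx
      rw [this, sub_self]
    · have hy := y.2
      simp only [AddMonoidHom.mem_ker] at hy
      show φ (y.1 + x₀) = _
      rw [map_add, hy, hx₀, zero_add]
  -- counting
  have hfull : Nat.card (Fin k → ZMod n) = n ^ k := by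
    simp [Nat.card_fun, Nat.card_zmod, Nat.card_eq_fintype_card]
  have hquot : Nat.card (Fin k → ZMod n) = Nat.card ((Fin k → ZMod n) ⧸ φ.ker) * Nat.card φ.ker :=
    AddSubgroup.card_eq_card_quotient_mul_card_addSubgroup φ.ker
  have hrangecard : Nat.card ((Fin k → ZMod n) ⧸ φ.ker) = n / d := by
    rw [Nat.card_congr (QuotientAddGroup.quotientKerEquivRange φ).toEquiv, hrange]
    have : (((d : ℤ)) : ZMod n) = ((d : ℕ) : ZMod n) := by push_cast; ring
    rw [this, Nat.card_zmultiples, ZMod.addOrderOf_coe d (Nat.one_le_iff_ne_zero.mp hn), Nat.gcd_eq_right hdvdn]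
  have key : n ^ k = (n / d) * Nat.card φ.ker := by
    rw [← hfull, hquot, hrangecard]
  have hndpos : 0 < n / d := Nat.div_pos (Nat.le_of_dvd hn hdvdn) hdpos
  have hker : Nat.card φ.ker = d * n ^ (k - 1) := by
    have h2 : (n / d) * Nat.card φ.ker = (n / d) * (d * n ^ (k - 1)) := by
      rw [← key, ← mul_assoc, Nat.div_mul_cancel hdvdn]
      rw [← pow_succ']
      congr 1
      exact (Nat.succ_pred_eq_of_pos hk).symm
    exact Nat.eq_of_mul_eq_mul_left hndpos h2
  rw [hcard1, hker]
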